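/- Evolution of X from the evolution of B: let A be a linear operator, σ₂ Hermitian, γ skew-Hermitian, and suppose B(x,t) satisfies ∂B/∂t = i A ∂B/∂x as well as ∂/∂x (B σ₁) = −A B σ₂ − B γ. Then ∂/∂t [B(y,t) σ₂ B(y,t)*] = ∂/∂y [ i A B(y,t) σ₂ B(y,t)* − i B(y,t) σ₂ B(y,t)* A* + i B(y,t) γ B(y,t)* ]. Consequently, X(x,t) := X₀ + ∫₀ˣ B(y,t) σ₂ B(y,t)* dy + ∫₀ᵗ [ iA B(0,s) σ₂ B(0,s)* − i B(0,s) σ₂ B(0,s)* A* + i B(0,s) γ B(0,s)* ] ds satisfies both ∂X/∂x = B σ₂ B* and ∂X/∂t = iA B σ₂ B* − i B σ₂ B* A* + i B γ B*. -/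

import Mathlib

open Matrix MeasureTheory

attribute [local instance] Matrix.normedAddCommGroup Matrix.normedSpace

section Aux

noncomputable def mulCLM (a b c : ℕ) :
    Matrix (Fin a) (Fin b) ℂ →L[ℝ] Matrix (Fin b) (Fin c) ℂ →L[ℝ] Matrix (Fin a) (Fin c) ℂ :=
  LinearMap.toContinuousLinearMap <|
    { toFun := fun M => LinearMap.toContinuousLinearMap
        { toFun := fun N => M * N
          map_add' := by intros; exact Matrix.mul_add _ _ _
          map_smul' := by intros; simp [Matrix.mul_smul] }
      map_add' := by intros; ext N; simp [Matrix.add_mul]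
      map_smul' := by intros; ext N; simp [Matrix.smul_mul] }

@[simp] lemma mulCLM_apply {a b c : ℕ} (M : Matrix (Fin a) (Fin b) ℂ)
    (N : Matrix (Fin b) (Fin c) ℂ) : mulCLM a b c M N = M * N := rfl

theorem HasDerivAt.matmul {a b c : ℕ} {f : ℝ → Matrix (Fin a) (Fin b) ℂ}
    {g : ℝ → Matrix (Fin b) (Fin c) ℂ} {f' g'} {x : ℝ}
    (hf : HasDerivAt f f' x) (hg : HasDerivAt g g' x) :
    HasDerivAt (fun t => f t * g t) (f' * g x + f x * g') x := by
  letI i1 : NormedAddCommGroup (Matrix (Fin b) (Fin c) ℂ →L[ℝ] Matrix (Fin a) (Fin c) ℂ) :=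
    ContinuousLinearMap.toNormedAddCommGroup
  letI : NormedSpace ℝ (Matrix (Fin b) (Fin c) ℂ →L[ℝ] Matrix (Fin a) (Fin c) ℂ) :=
    ContinuousLinearMap.toNormedSpace
  have hc : HasDerivAt (fun t => mulCLM a b c (f t)) (mulCLM a b c f') x :=
    (mulCLM a b c).hasFDerivAt.comp_hasDerivAt x hf
  have := hc.clm_apply hg; exact this

theorem Continuous.matmul {X : Type*} [TopologicalSpace X] {a b c : ℕ}
    {f : X → Matrix (Fin a) (Fin b) ℂ} {g : X → Matrix (Fin b) (Fin c) ℂ}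
    (hf : Continuous f) (hg : Continuous g) : Continuous fun x => f x * g x :=
  ((mulCLM a b c).continuous.comp hf).clm_apply hg

noncomputable def ctCLM (a b : ℕ) :
    Matrix (Fin a) (Fin b) ℂ →L[ℝ] Matrix (Fin b) (Fin a) ℂ :=
  LinearMap.toContinuousLinearMap
    { toFun := fun M => Mᴴ
      map_add' := fun M N => conjTranspose_add M N
      map_smul' := by intros r M; simp [conjTranspose_smul, Complex.star_def,
        Complex.conj_ofReal] }

@[simp] lemma ctCLM_apply {a b : ℕ} (M : Matrix (Fin a) (Fin b) ℂ) : ctCLM a b M = Mᴴ := rfl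

theorem HasDerivAt.matct {a b : ℕ} {f : ℝ → Matrix (Fin a) (Fin b) ℂ} {f'} {x : ℝ}
    (hf : HasDerivAt f f' x) : HasDerivAt (fun t => (f t)ᴴ) f'ᴴ x :=
  (ctCLM a b).hasFDerivAt.comp_hasDerivAt x hf

theorem Continuous.matct {X : Type*} [TopologicalSpace X] {a b : ℕ}
    {f : X → Matrix (Fin a) (Fin b) ℂ} (hf : Continuous f) :
    Continuous fun x => (f x)ᴴ := (ctCLM a b).continuous.comp hf

variable {E : Type*} [NormedAddCommGroup E] [NormedSpace ℝ E] [CompleteSpace E]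

lemma my_swap (f : ℝ → ℝ → E) (hf : Continuous fun q : ℝ × ℝ => f q.1 q.2) (a b c d : ℝ) :
    (∫ y in a..b, ∫ u in c..d, f y u) = ∫ u in c..d, ∫ y in a..b, f y u := by
  have key : ∀ (s t : Set ℝ), Bornology.IsBounded s → Bornology.IsBounded t →
      (∫ y in s, ∫ u in t, f y u) = ∫ u in t, ∫ y in s, f y u := by
    intro s t hbs hbt
    have hK : IsCompact ((closure s) ×ˢ (closure t)) :=
      (Metric.isCompact_of_isClosed_isBounded isClosed_closure hbs.closure).prod
        (Metric.isCompact_of_isClosed_isBounded isClosed_closure hbt.closure)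
    have hint : Integrable (Function.uncurry f)
        ((volume.restrict s).prod (volume.restrict t)) := by
      rw [Measure.prod_restrict]
      exact (hf.continuousOn.integrableOn_compact hK).mono_set
        (Set.prod_mono subset_closure subset_closure)
    exact integral_integral_swap hint
  have hb : Bornology.IsBounded (Set.uIoc a b) := by
    rw [Set.uIoc]; exact Metric.isBounded_Ioc _ _
  have hb' : Bornology.IsBounded (Set.uIoc c d) := by
    rw [Set.uIoc]; exact Metric.isBounded_Ioc _ _
  simp only [intervalIntegral.intervalIntegral_eq_integral_uIoc, integral_smul]
  rw [key _ _ hb hb', smul_comm]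

lemma ode_exp (L : E →L[ℝ] E) (b : ℝ → E) (hb : ∀ t, HasDerivAt b (L (b t)) t) (t : ℝ) :
    b t = (NormedSpace.exp (t • L)) (b 0) := by
  letI : NormedAlgebra ℚ (E →L[ℝ] E) := NormedAlgebra.restrictScalars ℚ ℝ _
  have hneg : ∀ s : ℝ, HasDerivAt (fun s : ℝ => NormedSpace.exp (-(s • L)))
      (-(NormedSpace.exp (-(s • L)) * L)) s := by
    intro s
    have h1 := (hasDerivAt_exp_smul_const (𝕂 := ℝ) L (-s)).scomp s (hasDerivAt_neg s)
    simpa [Function.comp_def] using h1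
  have hz : ∀ s, HasDerivAt (fun s : ℝ => (NormedSpace.exp (-(s • L))) (b s)) 0 s := by
    intro s
    have := (hneg s).clm_apply (hb s)
    simpa [ContinuousLinearMap.mul_apply] using this
  have hconst : (NormedSpace.exp (-(t • L))) (b t)
      = (NormedSpace.exp (-((0:ℝ) • L))) (b 0) := by
    apply is_const_of_deriv_eq_zero (fun s => (hz s).differentiableAt)
    intro s; exact (hz s).deriv
  have hg0 : (NormedSpace.exp (-((0:ℝ) • L))) (b 0) = b 0 := by
    simp [NormedSpace.exp_zero]
  have hcomm : Commute (t • L) (-(t • L)) := (Commute.refl (t • L)).neg_right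
  have hmul : NormedSpace.exp (t • L) * NormedSpace.exp (-(t • L)) = 1 := by
    rw [← NormedSpace.exp_add_of_commute hcomm]
    simp [NormedSpace.exp_zero]
  calc b t = ((NormedSpace.exp (t • L) * NormedSpace.exp (-(t • L))) : E →L[ℝ] E) (b t) := by
        rw [hmul]; simp
    _ = (NormedSpace.exp (t • L)) ((NormedSpace.exp (-(t • L))) (b t)) := rfl
    _ = (NormedSpace.exp (t • L)) (b 0) := by rw [hconst, hg0]

lemma joint_cont (L : E →L[ℝ] E) (b : ℝ → ℝ → E)
    (hb : ∀ x t, HasDerivAt (b x) (L (b x t)) t) (h0 : Continuous fun x => b x 0) :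
    Continuous fun q : ℝ × ℝ => b q.1 q.2 := by
  letI : NormedAlgebra ℚ (E →L[ℝ] E) := NormedAlgebra.restrictScalars ℚ ℝ _
  have he : (fun q : ℝ × ℝ => b q.1 q.2)
      = fun q : ℝ × ℝ => (NormedSpace.exp (q.2 • L)) (b q.1 0) :=
    funext fun q => ode_exp L (b q.1) (hb q.1) q.2
  rw [he]
  exact (NormedSpace.exp_continuous.comp (continuous_snd.smul continuous_const)).clm_apply
    (h0.comp continuous_fst)

end Aux

/-- Evolution of `X` from the evolution of `B`: if `∂B/∂t = iA ∂B/∂x` and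
`∂/∂x(Bσ₁) = −ABσ₂ − Bγ`, then `∂/∂t (B σ₂ Bᴴ) = ∂/∂y R` where
`R = iA B σ₂ Bᴴ − i B σ₂ Bᴴ Aᴴ + i B γ Bᴴ`, and the explicitly integrated
`X(x,t)` satisfies `∂X/∂x = B σ₂ Bᴴ` and `∂X/∂t = R`. -/
theorem stmt15 {n p : ℕ}
    (A : Matrix (Fin n) (Fin n) ℂ) (σ₁ σ₂ γ : Matrix (Fin p) (Fin p) ℂ)
    (hσ₁ : σ₁.IsHermitian) (hσ₁inv : IsUnit σ₁) (hσ₂ : σ₂.IsHermitian)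
    (hγ : γᴴ = -γ)
    (B Bx Bt : ℝ → ℝ → Matrix (Fin n) (Fin p) ℂ)
    (hBx : ∀ x t : ℝ, HasDerivAt (fun ξ => B ξ t) (Bx x t) x)
    (hBt : ∀ x t : ℝ, HasDerivAt (fun s => B x s) (Bt x t) t)
    (hPDEt : ∀ x t : ℝ, Bt x t = Complex.I • (A * Bx x t))
    (hPDEx : ∀ x t : ℝ, Bx x t * σ₁ = -(A * B x t * σ₂) - B x t * γ)
    (R : ℝ → ℝ → Matrix (Fin n) (Fin n) ℂ)
    (hR : ∀ x t : ℝ, R x t = Complex.I • (A * (B x t * σ₂ * (B x t)ᴴ))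
        - Complex.I • (B x t * σ₂ * (B x t)ᴴ * Aᴴ)
        + Complex.I • (B x t * γ * (B x t)ᴴ))
    (X₀ : Matrix (Fin n) (Fin n) ℂ)
    (Xf : ℝ → ℝ → Matrix (Fin n) (Fin n) ℂ)
    (hXf : ∀ x t : ℝ, Xf x t = X₀ + (∫ y in (0:ℝ)..x, B y t * σ₂ * (B y t)ᴴ)
        + ∫ s in (0:ℝ)..t, R 0 s) :
    (∀ y t : ℝ, HasDerivAt (fun s => B y s * σ₂ * (B y s)ᴴ)
        (deriv (fun z => R z t) y) t)
    ∧ (∀ x t : ℝ, HasDerivAt (fun ξ => Xf ξ t) (B x t * σ₂ * (B x t)ᴴ) x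
        ∧ HasDerivAt (fun s => Xf x s) (R x t) t) := by
  have hdet : IsUnit σ₁.det := (Matrix.isUnit_iff_isUnit_det σ₁).mp hσ₁inv
  -- Bx in terms of B
  have hBxf : ∀ x t, Bx x t = (-(A * B x t * σ₂) - B x t * γ) * σ₁⁻¹ := by
    intro x t
    rw [← hPDEx x t, Matrix.mul_nonsing_inv_cancel_right _ _ hdet]
  -- The linear vector field L with ∂B/∂t = L(B)
  set L : Matrix (Fin n) (Fin p) ℂ →L[ℝ] Matrix (Fin n) (Fin p) ℂ :=
    LinearMap.toContinuousLinearMap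
      { toFun := fun M => Complex.I • (A * ((-(A * M * σ₂) - M * γ) * σ₁⁻¹))
        map_add' := by
          intro M N
          simp only [Matrix.add_mul, Matrix.mul_add, Matrix.sub_mul, Matrix.neg_mul, neg_add,
            sub_eq_add_neg, smul_add]
          module
        map_smul' := by
          intro r M
          simp only [RingHom.id_apply, Matrix.smul_mul, Matrix.mul_smul, ← smul_neg, ← smul_sub]
          rw [smul_comm] } with hLdef
  have hLapp : ∀ M, L M = Complex.I • (A * ((-(A * M * σ₂) - M * γ) * σ₁⁻¹)) := fun M => rfl
  have hBtL : ∀ x t, Bt x t = L (B x t) := by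
    intro x t
    rw [hPDEt x t, hLapp, ← hBxf x t]
  have hBtLd : ∀ x t, HasDerivAt (fun s => B x s) (L (B x t)) t := by
    intro x t; rw [← hBtL]; exact hBt x t
  -- joint continuity
  have hB0 : Continuous fun x => B x 0 :=
    continuous_iff_continuousAt.2 fun x => (hBx x 0).continuousAt
  have hBj : Continuous fun q : ℝ × ℝ => B q.1 q.2 := joint_cont L B hBtLd hB0
  have hBxj : Continuous fun q : ℝ × ℝ => Bx q.1 q.2 := by
    have : (fun q : ℝ × ℝ => Bx q.1 q.2)
        = fun q : ℝ × ℝ => (-(A * B q.1 q.2 * σ₂) - B q.1 q.2 * γ) * σ₁⁻¹ :=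
      funext fun q => hBxf q.1 q.2
    rw [this]
    exact (((continuous_const.matmul hBj).matmul continuous_const).neg.sub
      (hBj.matmul continuous_const)).matmul continuous_const
  have hBtj : Continuous fun q : ℝ × ℝ => Bt q.1 q.2 := by
    have : (fun q : ℝ × ℝ => Bt q.1 q.2) = fun q : ℝ × ℝ => L (B q.1 q.2) :=
      funext fun q => hBtL q.1 q.2
    rw [this]
    exact L.continuous.comp hBj
  -- abbreviations
  set F : ℝ → ℝ → Matrix (Fin n) (Fin n) ℂ := fun y t => B y t * σ₂ * (B y t)ᴴ with hFdef
  set Pt : ℝ → ℝ → Matrix (Fin n) (Fin n) ℂ :=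
    fun y t => Bt y t * σ₂ * (B y t)ᴴ + B y t * σ₂ * (Bt y t)ᴴ with hPtdef
  set Rx : ℝ → ℝ → Matrix (Fin n) (Fin n) ℂ := fun y t =>
    Complex.I • (A * (Bx y t * σ₂ * (B y t)ᴴ + B y t * σ₂ * (Bx y t)ᴴ))
      - Complex.I • ((Bx y t * σ₂ * (B y t)ᴴ + B y t * σ₂ * (Bx y t)ᴴ) * Aᴴ)
      + Complex.I • (Bx y t * γ * (B y t)ᴴ + B y t * γ * (Bx y t)ᴴ) with hRxdef
  -- derivatives
  have hF_t : ∀ y t, HasDerivAt (fun s => F y s) (Pt y t) t := by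
    intro y t
    have h := ((hBt y t).matmul (hasDerivAt_const t σ₂)).matmul ((hBt y t).matct)
    simpa [hFdef, hPtdef] using h
  have hF_x : ∀ y t, HasDerivAt (fun z => F z t)
      (Bx y t * σ₂ * (B y t)ᴴ + B y t * σ₂ * (Bx y t)ᴴ) y := by
    intro y t
    have h := ((hBx y t).matmul (hasDerivAt_const y σ₂)).matmul ((hBx y t).matct)
    simpa [hFdef] using h
  have hR_y : ∀ y t, HasDerivAt (fun z => R z t) (Rx y t) y := by
    intro y t
    have hfun : (fun z => R z t) = fun z =>
        Complex.I • (A * F z t) - Complex.I • (F z t * Aᴴ)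
          + Complex.I • (B z t * γ * (B z t)ᴴ) :=
      funext fun z => hR z t
    rw [hfun]
    have h1 : HasDerivAt (fun z => A * F z t)
        (A * (Bx y t * σ₂ * (B y t)ᴴ + B y t * σ₂ * (Bx y t)ᴴ)) y := by
      have := (hasDerivAt_const y A).matmul (hF_x y t)
      simpa using this
    have h2 : HasDerivAt (fun z => F z t * Aᴴ)
        ((Bx y t * σ₂ * (B y t)ᴴ + B y t * σ₂ * (Bx y t)ᴴ) * Aᴴ) y := by
      have := (hF_x y t).matmul (hasDerivAt_const y Aᴴ)
      simpa using this
    have h3 : HasDerivAt (fun z => B z t * γ * (B z t)ᴴ)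
        (Bx y t * γ * (B y t)ᴴ + B y t * γ * (Bx y t)ᴴ) y := by
      have := ((hBx y t).matmul (hasDerivAt_const y γ)).matmul ((hBx y t).matct)
      simpa using this
    exact ((h1.const_smul Complex.I).sub (h2.const_smul Complex.I)).add
      (h3.const_smul Complex.I)
  -- the key algebraic identity
  have keyalg : ∀ y t, Pt y t = Rx y t := by
    intro y t
    set M := B y t with hM
    set N := Bx y t with hN
    have hBtv : Bt y t = Complex.I • (A * N) := hPDEt y t
    have hctBt : (Bt y t)ᴴ = -(Complex.I • (Nᴴ * Aᴴ)) := by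
      rw [hBtv]
      simp [conjTranspose_smul, conjTranspose_mul, Complex.star_def, Complex.conj_I, neg_smul]
    have h2 : σ₁ * Nᴴ = γ * Mᴴ - σ₂ * (Mᴴ * Aᴴ) := by
      have h := congrArg Matrix.conjTranspose (hPDEx y t)
      simp only [conjTranspose_mul, conjTranspose_neg, conjTranspose_sub, hσ₁.eq, hσ₂.eq, hγ,
        Matrix.neg_mul, Matrix.mul_assoc, ← hM, ← hN] at h
      rw [h]; abel
    have h3 : A * M * σ₂ + M * γ = -(N * σ₁) := by
      rw [hPDEx y t]; abel
    have key : A * (M * (σ₂ * Nᴴ)) + M * (γ * Nᴴ)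
        = N * (σ₂ * (Mᴴ * Aᴴ)) - N * (γ * Mᴴ) := by
      calc A * (M * (σ₂ * Nᴴ)) + M * (γ * Nᴴ)
          = (A * M * σ₂ + M * γ) * Nᴴ := by
            simp [Matrix.add_mul, Matrix.mul_assoc]
        _ = -(N * σ₁) * Nᴴ := by rw [h3]
        _ = -(N * (σ₁ * Nᴴ)) := by simp [Matrix.mul_assoc]
        _ = -(N * (γ * Mᴴ - σ₂ * (Mᴴ * Aᴴ))) := by rw [h2]
        _ = N * (σ₂ * (Mᴴ * Aᴴ)) - N * (γ * Mᴴ) := by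
            rw [Matrix.mul_sub]; abel
    have keyatom : A * (M * (σ₂ * Nᴴ))
        = N * (σ₂ * (Mᴴ * Aᴴ)) - N * (γ * Mᴴ) - M * (γ * Nᴴ) := by
      rw [← key]; abel
    show Bt y t * σ₂ * Mᴴ + M * σ₂ * (Bt y t)ᴴ = _
    rw [hctBt, hBtv]
    simp only [hRxdef, ← hM, ← hN]
    simp only [Matrix.smul_mul, Matrix.mul_smul, Matrix.mul_neg, Matrix.neg_mul, smul_add,
      smul_sub, smul_neg, Matrix.mul_add, Matrix.add_mul, Matrix.mul_assoc]
    rw [keyatom]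
    module
  -- part 1
  refine ⟨?_, ?_⟩
  · intro y t
    have hd : deriv (fun z => R z t) y = Rx y t := (hR_y y t).deriv
    rw [hd, ← keyalg y t]
    exact hF_t y t
  -- part 2
  · intro x t
    -- continuity facts
    have hFj : Continuous fun q : ℝ × ℝ => F q.1 q.2 :=
      (hBj.matmul continuous_const).matmul hBj.matct
    have hPtj : Continuous fun q : ℝ × ℝ => Pt q.1 q.2 :=
      ((hBtj.matmul continuous_const).matmul hBj.matct).add
        ((hBj.matmul continuous_const).matmul hBtj.matct)
    have hRxj : Continuous fun q : ℝ × ℝ => Rx q.1 q.2 := by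
      refine Continuous.add (Continuous.sub ?_ ?_) ?_
      · exact (continuous_const.matmul (((hBxj.matmul continuous_const).matmul hBj.matct).add
          ((hBj.matmul continuous_const).matmul hBxj.matct))).const_smul Complex.I
      · exact ((((hBxj.matmul continuous_const).matmul hBj.matct).add
          ((hBj.matmul continuous_const).matmul hBxj.matct)).matmul continuous_const).const_smul Complex.I
      · exact (((hBxj.matmul continuous_const).matmul hBj.matct).add
          ((hBj.matmul continuous_const).matmul hBxj.matct)).const_smul Complex.I
    have marg1 : ∀ {a b : ℕ} (G : ℝ → ℝ → Matrix (Fin a) (Fin b) ℂ),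
        Continuous (fun q : ℝ × ℝ => G q.1 q.2) → ∀ c, Continuous fun y => G y c := by
      intro a b G hG c
      exact hG.comp (continuous_id.prodMk continuous_const)
    have marg2 : ∀ {a b : ℕ} (G : ℝ → ℝ → Matrix (Fin a) (Fin b) ℂ),
        Continuous (fun q : ℝ × ℝ => G q.1 q.2) → ∀ c, Continuous fun s => G c s := by
      intro a b G hG c
      exact hG.comp (continuous_const.prodMk continuous_id)
    have hFy : ∀ c : ℝ, Continuous fun y => F y c := marg1 F hFj
    have hRs : ∀ c : ℝ, Continuous fun s => R c s := by
      intro c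
      have : (fun s => R c s) = fun s =>
          Complex.I • (A * F c s) - Complex.I • (F c s * Aᴴ)
            + Complex.I • (B c s * γ * (B c s)ᴴ) := by
        funext s; simp only [hFdef]; exact hR c s
      rw [this]
      have hFs : Continuous fun s => F c s := marg2 F hFj c
      have hBs : Continuous fun s => B c s := marg2 B hBj c
      exact (((continuous_const.matmul hFs).const_smul Complex.I).sub
        ((hFs.matmul continuous_const).const_smul Complex.I)).add
        (((hBs.matmul continuous_const).matmul hBs.matct).const_smul Complex.I)
    -- x-derivative
    constructor
    · have hfun : (fun ξ => Xf ξ t) = fun ξ =>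
          X₀ + (∫ y in (0:ℝ)..ξ, F y t) + ∫ s in (0:ℝ)..t, R 0 s := by
        funext ξ; simp only [hFdef]; exact hXf ξ t
      rw [hfun]
      have h := ((hFy t).integral_hasStrictDerivAt 0 x).hasDerivAt
      have h2 := (h.const_add X₀).add_const (∫ s in (0:ℝ)..t, R 0 s)
      exact h2
    -- t-derivative
    · have hG : ∀ s : ℝ, (∫ y in (0:ℝ)..x, F y s)
          = (∫ y in (0:ℝ)..x, F y 0) + ∫ u in (0:ℝ)..s, (R x u - R 0 u) := by
        intro s
        have h1 : ∀ y : ℝ, (∫ u in (0:ℝ)..s, Pt y u) = F y s - F y 0 := by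
          intro y
          have hPty : Continuous fun u => Pt y u := marg2 Pt hPtj y
          exact intervalIntegral.integral_eq_sub_of_hasDerivAt
            (fun u _ => hF_t y u) (hPty.intervalIntegrable 0 s)
        have h2 : ∀ u : ℝ, (∫ y in (0:ℝ)..x, Rx y u) = R x u - R 0 u := by
          intro u
          have hRxy : Continuous fun y => Rx y u := marg1 Rx hRxj u
          exact intervalIntegral.integral_eq_sub_of_hasDerivAt
            (fun y _ => hR_y y u) (hRxy.intervalIntegrable 0 x)
        have hsub : (∫ y in (0:ℝ)..x, F y s) - (∫ y in (0:ℝ)..x, F y 0)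
            = ∫ y in (0:ℝ)..x, (F y s - F y 0) :=
          (intervalIntegral.integral_sub ((hFy s).intervalIntegrable 0 x)
            ((hFy 0).intervalIntegrable 0 x)).symm
        have hchain : (∫ y in (0:ℝ)..x, (F y s - F y 0))
            = ∫ u in (0:ℝ)..s, (R x u - R 0 u) := by
          calc (∫ y in (0:ℝ)..x, (F y s - F y 0))
              = ∫ y in (0:ℝ)..x, ∫ u in (0:ℝ)..s, Pt y u :=
                intervalIntegral.integral_congr fun y _ => (h1 y).symm
            _ = ∫ u in (0:ℝ)..s, ∫ y in (0:ℝ)..x, Pt y u := my_swap Pt hPtj 0 x 0 s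
            _ = ∫ u in (0:ℝ)..s, ∫ y in (0:ℝ)..x, Rx y u := by
                refine intervalIntegral.integral_congr fun u _ => ?_
                exact intervalIntegral.integral_congr fun y _ => keyalg y u
            _ = ∫ u in (0:ℝ)..s, (R x u - R 0 u) :=
                intervalIntegral.integral_congr fun u _ => h2 u
        exact sub_eq_iff_eq_add'.mp (hsub.trans hchain)
      have hfun : (fun s => Xf x s) = fun s =>
          (X₀ + (∫ y in (0:ℝ)..x, F y 0)) + ((∫ u in (0:ℝ)..s, (R x u - R 0 u))
            + ∫ u in (0:ℝ)..s, R 0 u) := by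
        funext s
        rw [hXf x s, hG s]
        simp only [hFdef]
        abel
      rw [hfun]
      have hd1 : HasDerivAt (fun s => ∫ u in (0:ℝ)..s, (R x u - R 0 u)) (R x t - R 0 t) t :=
        (((hRs x).sub (hRs 0)).integral_hasStrictDerivAt 0 t).hasDerivAt
      have hd2 : HasDerivAt (fun s => ∫ u in (0:ℝ)..s, R 0 u) (R 0 t) t :=
        ((hRs 0).integral_hasStrictDerivAt 0 t).hasDerivAt
      have h := (hd1.add hd2).const_add (X₀ + (∫ y in (0:ℝ)..x, F y 0))
      rw [sub_add_cancel] at h; exact h
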